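/- Let n ≥ 5. Define permutations in Sym(2n): β₀ = (1,n+1)(2,n+2) and βᵢ = (i,i+1)(n+i,n+i+1) for 1 ≤ i ≤ n−1. Then the subgroup generated by β₀, β₁, …, β_{n−1} has order 2^{n−1}·n!. -/

import Mathlib

/-- `βᵢ` generators of the standard copy of the Coxeter group `Dₙ` inside `Sym(2n)`
(realized as permutations of `ℕ`, moving only points in `{1,…,2n}`). -/
def beta (n i : ℕ) : Equiv.Perm ℕ :=
  if i = 0 then Equiv.swap 1 (n + 1) * Equiv.swap 2 (n + 2)
  else Equiv.swap i (i + 1) * Equiv.swap (n + i) (n + i + 1)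

/-- The standard copy of the Coxeter group `Dₙ` in `Sym(2n)`, generated by `β₀,…,β_{n-1}`. -/
def Dn (n : ℕ) : Subgroup (Equiv.Perm ℕ) :=
  Subgroup.closure {g | ∃ i < n, g = beta n i}

namespace DnAux
open Equiv Equiv.Perm

variable {n : ℕ}

/-- the involution swapping the two copies -/
def tau (n : ℕ) : Perm (Fin n × Bool) :=
  Function.Involutive.toPerm (fun p => (p.1, !p.2)) (fun p => by simp)

@[simp] lemma tau_apply (p : Fin n × Bool) : tau n p = (p.1, !p.2) := rfl

/-- diagonal embedding of `Perm (Fin n)` -/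
def dHom (n : ℕ) : Perm (Fin n) →* Perm (Fin n × Bool) where
  toFun σ := σ.prodCongr (Equiv.refl Bool)
  map_one' := by ext p <;> simp
  map_mul' σ τ := by ext p <;> simp

@[simp] lemma dHom_apply (σ : Perm (Fin n)) (p : Fin n × Bool) :
    dHom n σ p = (σ p.1, p.2) := rfl

/-- sign-flips on a finite set of coordinates -/
def flip (s : Finset (Fin n)) : Perm (Fin n × Bool) :=
  Function.Involutive.toPerm (fun p => (p.1, if p.1 ∈ s then !p.2 else p.2))
    (fun p => by by_cases h : p.1 ∈ s <;> simp [h])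

@[simp] lemma flip_apply (s : Finset (Fin n)) (p : Fin n × Bool) :
    flip s p = (p.1, if p.1 ∈ s then !p.2 else p.2) := rfl

@[simp] lemma flip_empty : flip (∅ : Finset (Fin n)) = 1 := by
  ext p <;> simp

lemma flip_insert (a : Fin n) (s : Finset (Fin n)) (ha : a ∉ s) :
    flip (insert a s) = Equiv.swap (a, false) (a, true) * flip s := by
  ext ⟨i, b⟩
  · by_cases h1 : i = a <;> by_cases h2 : i ∈ s <;> cases b <;>
      simp_all [swap_apply_def, Prod.ext_iff]
  · by_cases h1 : i = a <;> by_cases h2 : i ∈ s <;> cases b <;>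
      simp_all [swap_apply_def, Prod.ext_iff]

lemma flip_union (s t : Finset (Fin n)) (h : Disjoint s t) :
    flip (s ∪ t) = flip s * flip t := by
  have := Finset.disjoint_left.mp h
  ext ⟨i, b⟩
  · simp
  · by_cases h1 : i ∈ s <;> by_cases h2 : i ∈ t <;>
      simp_all [Finset.mem_union]

lemma sign_flip (s : Finset (Fin n)) : Perm.sign (flip s) = (-1) ^ s.card := by
  induction s using Finset.induction with
  | empty => simp
  | insert _ _ ha =>
    rename_i a s ih
    rw [flip_insert a s ha, map_mul, ih, Perm.sign_swap (by simp),
      Finset.card_insert_of_notMem ha, pow_succ]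
    rw [mul_comm]

lemma dHom_swap (a b : Fin n) (hab : a ≠ b) :
    dHom n (Equiv.swap a b) =
      Equiv.swap (a, false) (b, false) * Equiv.swap (a, true) (b, true) := by
  ext ⟨i, c⟩
  · cases c <;> by_cases h1 : i = a <;> by_cases h2 : i = b <;>
      simp_all [swap_apply_def, Prod.ext_iff]
  · cases c <;> by_cases h1 : i = a <;> by_cases h2 : i = b <;>
      simp_all [swap_apply_def, Prod.ext_iff]

lemma sign_dHom (σ : Perm (Fin n)) : Perm.sign (dHom n σ) = 1 := by
  refine Perm.swap_induction_on σ (by simp) ?_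
  intro f x y hxy ih
  rw [map_mul, map_mul, dHom_swap x y hxy, map_mul, ih]
  rw [Perm.sign_swap (by simp [Prod.ext_iff, hxy]),
    Perm.sign_swap (by simp [Prod.ext_iff, hxy])]
  simp

lemma tau_comm_flip (s : Finset (Fin n)) : tau n * flip s = flip s * tau n := by
  ext ⟨i, b⟩
  · simp
  · by_cases h : i ∈ s <;> simp [h]

lemma tau_comm_dHom (σ : Perm (Fin n)) : tau n * dHom n σ = dHom n σ * tau n := by
  ext ⟨i, b⟩ <;> simp

lemma dHom_mul_flip (σ : Perm (Fin n)) (s : Finset (Fin n)) :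
    dHom n σ * flip s = flip (s.image σ) * dHom n σ := by
  ext ⟨i, b⟩
  · simp [Perm.mul_apply]
  · have hmem : σ i ∈ Finset.image (⇑σ) s ↔ i ∈ s := by
      simp [Finset.mem_image, σ.injective.eq_iff]
    by_cases h : i ∈ s <;> simp_all [Perm.mul_apply]

lemma dHom_conj_flip (σ : Perm (Fin n)) (s : Finset (Fin n)) :
    dHom n σ * flip s * (dHom n σ)⁻¹ = flip (s.image σ) := by
  rw [mul_inv_eq_iff_eq_mul, dHom_mul_flip]


def CC (n : ℕ) : Subgroup (Perm (Fin n × Bool)) := Subgroup.centralizer {tau n}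

lemma mem_CC {g : Perm (Fin n × Bool)} : g ∈ CC n ↔ tau n * g = g * tau n := by
  rw [CC, Subgroup.mem_centralizer_iff]
  simp

lemma flip_dHom_mem_CC (s : Finset (Fin n)) (σ : Perm (Fin n)) :
    flip s * dHom n σ ∈ CC n := by
  rw [mem_CC, ← mul_assoc, tau_comm_flip, mul_assoc, tau_comm_dHom, mul_assoc]

lemma decomp {g : Perm (Fin n × Bool)} (hg : g ∈ CC n) :
    ∃ (s : Finset (Fin n)) (σ : Perm (Fin n)), g = flip s * dHom n σ := by
  have hcomm : ∀ p : Fin n × Bool, tau n (g p) = g (tau n p) := by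
    intro p
    have := mem_CC.mp hg
    calc tau n (g p) = (tau n * g) p := rfl
      _ = (g * tau n) p := by rw [this]
      _ = g (tau n p) := rfl
  have key : ∀ i : Fin n, g (i, true) = ((g (i, false)).1, !(g (i, false)).2) := by
    intro i
    have := hcomm (i, false)
    simp only [tau_apply] at this
    rw [show (true : Bool) = !false from rfl, ← this]
  have hinj : Function.Injective (fun i : Fin n => (g (i, false)).1) := by
    intro i j hij
    simp only at hij
    by_cases h2 : (g (i, false)).2 = (g (j, false)).2
    · have : g (i, false) = g (j, false) := Prod.ext hij h2
      exact (Prod.mk.injEq .. ▸ (g.injective this)).1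
    · have hb : (g (i, false)).2 = !(g (j, false)).2 := by
        cases hb1 : (g (i, false)).2 <;> cases hb2 : (g (j, false)).2 <;> simp_all
      have : g (i, false) = g (j, true) := by
        rw [key j, ← hij, ← hb]
      have := g.injective this
      simp at this
  obtain ⟨σ, hσ⟩ : ∃ σ : Perm (Fin n), ∀ i, σ i = (g (i, false)).1 :=
    ⟨Equiv.ofBijective _ ((Finite.injective_iff_bijective).1 hinj), fun i => rfl⟩
  refine ⟨Finset.univ.filter (fun j => (g (σ.symm j, false)).2 = true), σ, ?_⟩
  have hfilter : ∀ i : Fin n, ((σ i) ∈ Finset.univ.filter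
      (fun j => (g (σ.symm j, false)).2 = true)) ↔ (g (i, false)).2 = true := by
    intro i
    simp [Finset.mem_filter]
  ext ⟨i, b⟩
  · have : (flip (Finset.univ.filter (fun j => (g (σ.symm j, false)).2 = true)) *
        dHom n σ) (i, b) = (σ i, if (g (i, false)).2 = true then !b else b) := by
      rw [Perm.mul_apply, dHom_apply, flip_apply]
      simp only []
      by_cases h : (g (i, false)).2 = true
      · rw [if_pos ((hfilter i).mpr h), if_pos h]
      · rw [if_neg (fun hh => h ((hfilter i).mp hh)), if_neg h]
    rw [this]
    cases b
    · simp [hσ]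
    · rw [key i]; simp [hσ]
  · have : (flip (Finset.univ.filter (fun j => (g (σ.symm j, false)).2 = true)) *
        dHom n σ) (i, b) = (σ i, if (g (i, false)).2 = true then !b else b) := by
      rw [Perm.mul_apply, dHom_apply, flip_apply]
      simp only []
      by_cases h : (g (i, false)).2 = true
      · rw [if_pos ((hfilter i).mpr h), if_pos h]
      · rw [if_neg (fun hh => h ((hfilter i).mp hh)), if_neg h]
    rw [this]
    cases b
    · cases h : (g (i, false)).2 <;> simp_all
    · rw [key i]; cases h : (g (i, false)).2 <;> simp_all

noncomputable def psi (n : ℕ) : Finset (Fin n) × Perm (Fin n) → CC n :=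
  fun p => ⟨flip p.1 * dHom n p.2, flip_dHom_mem_CC p.1 p.2⟩

lemma psi_bijective : Function.Bijective (psi n) := by
  constructor
  · rintro ⟨s, σ⟩ ⟨t, ρ⟩ h
    have h' : flip s * dHom n σ = flip t * dHom n ρ := Subtype.ext_iff.mp h
    have hev : ∀ i : Fin n, ((σ i : Fin n), if σ i ∈ s then !false else false)
        = ((ρ i : Fin n), if ρ i ∈ t then !false else false) := by
      intro i
      have := congrArg (fun (g : Perm (Fin n × Bool)) => g (i, false)) h'
      simpa [Perm.mul_apply] using this
    have hσρ : σ = ρ := by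
      ext i
      exact congrArg Fin.val (congrArg Prod.fst (hev i))
    subst hσρ
    have hst : s = t := by
      ext j
      have := congrArg Prod.snd (hev (σ.symm j))
      simp only [Equiv.apply_symm_apply] at this
      by_cases h1 : j ∈ s <;> by_cases h2 : j ∈ t <;> simp_all
    simp [hst]
  · rintro ⟨g, hg⟩
    obtain ⟨s, σ, rfl⟩ := decomp hg
    exact ⟨(s, σ), rfl⟩

lemma card_CC : Nat.card (CC n) = 2 ^ n * Nat.factorial n := by
  rw [← Nat.card_congr (Equiv.ofBijective _ (psi_bijective (n := n)))]
  simp [Nat.card_eq_fintype_card, Fintype.card_perm]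


/-- mod-`n` element of `Fin n` -/
def fm (n i : ℕ) (h : 0 < n) : Fin n := ⟨i % n, Nat.mod_lt _ h⟩

lemma fm_eq (i : ℕ) (h : 0 < n) (hi : i < n) : (fm n i h : Fin n) = ⟨i, hi⟩ := by
  simp [fm, Fin.ext_iff, Nat.mod_eq_of_lt hi]

/-- abstract generators -/
noncomputable def gg (n i : ℕ) : Perm (Fin n × Bool) :=
  if h : 0 < n then
    if i = 0 then flip {fm n 0 h, fm n 1 h}
    else dHom n (Equiv.swap (fm n (i - 1) h) (fm n i h))
  else 1

noncomputable def ggSet (n : ℕ) : Set (Perm (Fin n × Bool)) := {g | ∃ i < n, g = gg n i}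

def GG (n : ℕ) : Subgroup (Perm (Fin n × Bool)) := Subgroup.closure (ggSet n)

def HH (n : ℕ) : Subgroup (Perm (Fin n × Bool)) := CC n ⊓ Perm.sign.ker

lemma dHom_mem_GG (hn : 5 ≤ n) (σ : Perm (Fin n)) : dHom n σ ∈ GG n := by
  obtain ⟨m, rfl⟩ : ∃ m, n = m + 1 := ⟨n - 1, by omega⟩
  have h1 : σ ∈ Submonoid.closure
      (Set.range fun i : Fin m => Equiv.swap (Fin.castSucc i) (Fin.succ i)) := by
    rw [Equiv.Perm.mclosure_swap_castSucc_succ]; trivial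
  induction h1 using Submonoid.closure_induction with
  | one => rw [map_one]; exact one_mem _
  | mul x y _ _ hx hy => rw [map_mul]; exact mul_mem hx hy
  | mem x hx =>
    obtain ⟨i, rfl⟩ := hx
    have hpos : 0 < m + 1 := by omega
    have h2 : gg (m+1) (i.val + 1) = dHom (m+1) (Equiv.swap (Fin.castSucc i) (Fin.succ i)) := by
      rw [gg, dif_pos hpos, if_neg (by omega)]
      congr 1
      congr 1
      · rw [fm_eq _ hpos (by omega : i.val + 1 - 1 < m + 1)]
        exact Fin.ext (by simp)
      · rw [fm_eq _ hpos (by omega : i.val + 1 < m + 1)]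
        exact Fin.ext (by simp)
    rw [← h2]
    exact Subgroup.subset_closure ⟨i.val + 1, by omega, rfl⟩

lemma gg_zero (hn : 5 ≤ n) :
    gg n 0 = flip {(⟨0, by omega⟩ : Fin n), ⟨1, by omega⟩} := by
  have hpos : 0 < n := by omega
  rw [gg, dif_pos hpos, if_pos rfl, fm_eq _ hpos (by omega), fm_eq _ hpos (by omega)]

lemma flip_pair_mem_GG (hn : 5 ≤ n) {a b : Fin n} (hab : a ≠ b) :
    flip {a, b} ∈ GG n := by
  have hpos : 0 < n := by omega
  set z : Fin n := ⟨0, by omega⟩ with hz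
  set o : Fin n := ⟨1, by omega⟩ with ho
  have hzo : z ≠ o := by simp [hz, ho, Fin.ext_iff]
  set c : Fin n := Equiv.swap z a b with hc
  have hcz : c ≠ z := by
    intro h
    apply hab
    have := congrArg (Equiv.swap z a) h
    rw [hc, Equiv.swap_apply_self] at this
    · rw [this, Equiv.swap_apply_left]
  set σ : Perm (Fin n) := Equiv.swap z a * Equiv.swap o c with hσ
  have hσz : σ z = a := by
    rw [hσ, Perm.mul_apply, Equiv.swap_apply_of_ne_of_ne hzo (Ne.symm hcz),
      Equiv.swap_apply_left]
  have hσo : σ o = b := by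
    rw [hσ, Perm.mul_apply, Equiv.swap_apply_left, hc]
    have : Equiv.swap z a (Equiv.swap z a b) = (Equiv.swap z a * Equiv.swap z a) b := rfl
    rw [this, Equiv.swap_mul_self, Perm.one_apply]
  have himg : ({z, o} : Finset (Fin n)).image σ = {a, b} := by
    rw [Finset.image_insert, Finset.image_singleton, hσz, hσo]
  have : flip {a, b} = dHom n σ * flip {z, o} * (dHom n σ)⁻¹ := by
    rw [dHom_conj_flip, himg]
  rw [this, ← gg_zero hn]
  exact mul_mem (mul_mem (dHom_mem_GG hn σ)
    (Subgroup.subset_closure ⟨0, by omega, rfl⟩)) (inv_mem (dHom_mem_GG hn σ))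

lemma flip_even_mem_GG (hn : 5 ≤ n) (s : Finset (Fin n)) :
    Even s.card → flip s ∈ GG n := by
  induction s using Finset.strongInduction with
  | _ s ih =>
    intro hs
    rcases s.eq_empty_or_nonempty with rfl | ⟨a, ha⟩
    · rw [flip_empty]; exact one_mem _
    · have h1 : 1 ≤ s.card := Finset.card_pos.mpr ⟨a, ha⟩
      have h2 : 2 ≤ s.card := by rcases hs with ⟨k, hk⟩; omega
      have hcae : (s.erase a).card = s.card - 1 := Finset.card_erase_of_mem ha
      obtain ⟨b, hb⟩ : (s.erase a).Nonempty := Finset.card_pos.mp (by omega)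
      have hab : a ≠ b := fun h => (Finset.mem_erase.mp hb).1 h.symm
      have hbs : b ∈ s := (Finset.mem_erase.mp hb).2
      set t : Finset (Fin n) := (s.erase a).erase b with ht
      have hct : t.card = s.card - 2 := by
        rw [ht, Finset.card_erase_of_mem hb, hcae]
        omega
      have hu : ({a, b} : Finset (Fin n)) ∪ t = s := by
        ext x
        by_cases hxa : x = a <;> by_cases hxb : x = b <;>
          simp [ht, Finset.mem_erase, hxa, hxb, ha, hbs]
      have hdisj : Disjoint ({a, b} : Finset (Fin n)) t := by
        rw [Finset.disjoint_left]
        intro x hx hxt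
        rw [ht, Finset.mem_erase, Finset.mem_erase] at hxt
        rcases Finset.mem_insert.mp hx with rfl | hx2
        · exact hxt.2.1 rfl
        · exact hxt.1 (Finset.mem_singleton.mp hx2)
      have hss : t ⊂ s := by
        rw [ht]
        exact ((Finset.erase_ssubset hb).trans_subset (Finset.erase_subset a s))
      have hev : Even t.card := by
        rcases hs with ⟨k, hk⟩
        exact ⟨k - 1, by omega⟩
      have : flip s = flip {a, b} * flip t := by rw [← flip_union _ _ hdisj, hu]
      rw [this]
      exact mul_mem (flip_pair_mem_GG hn hab) (ih t hss hev)


lemma gg_mem_HH (hn : 5 ≤ n) {i : ℕ} (hi : i < n) : gg n i ∈ HH n := by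
  have hpos : 0 < n := by omega
  rw [HH, Subgroup.mem_inf]
  by_cases h0 : i = 0
  · subst h0
    rw [gg_zero hn]
    constructor
    · have := flip_dHom_mem_CC {(⟨0, by omega⟩ : Fin n), ⟨1, by omega⟩} (1 : Perm (Fin n))
      rwa [map_one, mul_one] at this
    · rw [MonoidHom.mem_ker, sign_flip]
      rw [Finset.card_insert_of_notMem (by simp [Fin.ext_iff]), Finset.card_singleton]
      norm_num
  · rw [gg, dif_pos hpos, if_neg h0]
    constructor
    · have := flip_dHom_mem_CC (∅ : Finset (Fin n))
        (Equiv.swap (fm n (i - 1) hpos) (fm n i hpos))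
      rwa [flip_empty, one_mul] at this
    · rw [MonoidHom.mem_ker, sign_dHom]

lemma GG_eq_HH (hn : 5 ≤ n) : GG n = HH n := by
  apply le_antisymm
  · rw [GG, Subgroup.closure_le]
    rintro g ⟨i, hi, rfl⟩
    exact gg_mem_HH hn hi
  · intro g hg
    rw [HH, Subgroup.mem_inf] at hg
    obtain ⟨s, σ, rfl⟩ := decomp hg.1
    have hsign := hg.2
    rw [MonoidHom.mem_ker, map_mul, sign_flip, sign_dHom, mul_one] at hsign
    have hev : Even s.card := by
      rwa [neg_one_pow_eq_one_iff_even (by decide : (-1 : ℤˣ) ≠ 1)] at hsign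
    exact mul_mem (flip_even_mem_GG hn s hev) (dHom_mem_GG hn σ)


lemma flip_mem_CC (s : Finset (Fin n)) : flip s ∈ CC n := by
  have := flip_dHom_mem_CC s (1 : Perm (Fin n))
  rwa [map_one, mul_one] at this

lemma card_HH (hn : 5 ≤ n) : Nat.card (HH n) = 2 ^ (n - 1) * Nat.factorial n := by
  classical
  set f : CC n →* ℤˣ := Perm.sign.comp (CC n).subtype with hf
  have hsurj : Function.Surjective f := by
    intro u
    rcases Int.units_eq_one_or u with rfl | rfl
    · exact ⟨1, map_one f⟩
    · refine ⟨⟨flip {(⟨0, by omega⟩ : Fin n)}, flip_mem_CC _⟩, ?_⟩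
      rw [hf, MonoidHom.comp_apply, Subgroup.coe_subtype, sign_flip]
      simp
  have hcard : Nat.card (CC n) = 2 * Nat.card f.ker := by
    rw [Subgroup.card_eq_card_quotient_mul_card_subgroup f.ker]
    congr 1
    rw [Nat.card_congr (QuotientGroup.quotientKerEquivOfSurjective f hsurj).toEquiv]
    rw [Nat.card_eq_fintype_card, Fintype.card_units_int]
  have hequiv : HH n ≃ f.ker := by
    refine ⟨fun x => ⟨⟨x.1, (Subgroup.mem_inf.mp x.2).1⟩, ?_⟩,
      fun y => ⟨y.1.1, Subgroup.mem_inf.mpr ⟨y.1.2, ?_⟩⟩, fun x => rfl, fun y => rfl⟩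
    · have := (Subgroup.mem_inf.mp x.2).2
      rwa [MonoidHom.mem_ker] at this ⊢
    · have := y.2
      rw [MonoidHom.mem_ker] at this ⊢
      exact this
  have h2 : 2 * Nat.card (HH n) = 2 * (2 ^ (n - 1) * Nat.factorial n) := by
    rw [Nat.card_congr hequiv, ← hcard, card_CC, ← mul_assoc]
    congr 1
    rw [← pow_succ']
    congr 1
    omega
  omega


lemma viaEmbedding_swap {α β : Type*} [DecidableEq α] [DecidableEq β] (ι : α ↪ β) (a b : α) :
    (Equiv.swap a b).viaEmbedding ι = Equiv.swap (ι a) (ι b) := by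
  ext x
  by_cases hx : x ∈ Set.range ι
  · obtain ⟨y, rfl⟩ := hx
    rw [Perm.viaEmbedding_apply]
    rcases eq_or_ne y a with rfl | hya
    · simp
    rcases eq_or_ne y b with rfl | hyb
    · simp
    · rw [Equiv.swap_apply_of_ne_of_ne hya hyb,
        Equiv.swap_apply_of_ne_of_ne (fun h => hya (ι.injective h))
          (fun h => hyb (ι.injective h))]
  · rw [Perm.viaEmbedding_apply_of_notMem _ _ x hx, Equiv.swap_apply_of_ne_of_ne]
    · exact fun h => hx ⟨a, h.symm⟩
    · exact fun h => hx ⟨b, h.symm⟩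

/-- the embedding of the `2n` points into `ℕ` -/
def emb (n : ℕ) : Fin n × Bool ↪ ℕ :=
  ⟨fun p => (cond p.2 n 0) + p.1.val + 1, by
    rintro ⟨⟨i, hi⟩, b⟩ ⟨⟨j, hj⟩, c⟩ h
    cases b <;> cases c <;> simp_all <;> omega⟩

lemma emb_apply (i : Fin n) (b : Bool) : emb n (i, b) = (cond b n 0) + i.val + 1 := rfl

noncomputable def phi (n : ℕ) : Perm (Fin n × Bool) →* Perm ℕ :=
  Perm.viaEmbeddingHom (emb n)

lemma phi_swap (a b : Fin n × Bool) :
    phi n (Equiv.swap a b) = Equiv.swap (emb n a) (emb n b) := by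
  rw [phi, Perm.viaEmbeddingHom_apply, viaEmbedding_swap]

lemma phi_gg (hn : 5 ≤ n) {i : ℕ} (hi : i < n) : phi n (gg n i) = beta n i := by
  have hpos : 0 < n := by omega
  by_cases h0 : i = 0
  · subst h0
    rw [gg_zero hn, beta]
    have hne : (⟨0, by omega⟩ : Fin n) ∉ ({⟨1, by omega⟩} : Finset (Fin n)) := by
      simp [Fin.ext_iff]
    rw [show ({(⟨0, by omega⟩ : Fin n), ⟨1, by omega⟩} : Finset (Fin n)) =
      insert ⟨0, by omega⟩ {⟨1, by omega⟩} from rfl]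
    rw [flip_insert _ _ hne, show ({(⟨1, by omega⟩ : Fin n)} : Finset (Fin n)) =
      insert ⟨1, by omega⟩ ∅ from rfl, flip_insert _ _ (by simp), flip_empty, mul_one]
    rw [map_mul, phi_swap, phi_swap]
    simp [emb_apply]
  · rw [gg, dif_pos hpos, if_neg h0, beta, if_neg h0]
    rw [fm_eq _ hpos (by omega : i - 1 < n), fm_eq _ hpos hi]
    rw [dHom_swap _ _ (by simp [Fin.ext_iff]; omega), map_mul, phi_swap, phi_swap]
    have h1 : i - 1 + 1 = i := by omega
    simp only [emb_apply]
    simp only [cond_false, cond_true]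
    rw [show 0 + (i - 1) + 1 = i by omega, show 0 + i + 1 = i + 1 by omega,
      show n + (i - 1) + 1 = n + i by omega, show n + i + 1 = n + i + 1 by omega]

lemma Dn_eq_map (hn : 5 ≤ n) : Dn n = Subgroup.map (phi n) (GG n) := by
  rw [Dn, GG, MonoidHom.map_closure]
  congr 1
  ext g
  constructor
  · rintro ⟨i, hi, rfl⟩
    exact ⟨gg n i, ⟨i, hi, rfl⟩, phi_gg hn hi⟩
  · rintro ⟨h, ⟨i, hi, rfl⟩, rfl⟩
    exact ⟨i, hi, (phi_gg hn hi)⟩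

theorem stmt0' (n : ℕ) (hn : 5 ≤ n) :
    Nat.card (Dn n) = 2 ^ (n - 1) * Nat.factorial n := by
  rw [Dn_eq_map hn, GG_eq_HH hn]
  rw [← Nat.card_congr (Subgroup.equivMapOfInjective (HH n) (phi n)
    (Perm.viaEmbeddingHom_injective (emb n))).toEquiv]
  exact card_HH hn


end DnAux

/-- The subgroup of `Sym(2n)` generated by `beta n 0, …, beta n (n-1)` has order
`2^(n-1) * n!` (it is a copy of the Coxeter group of type `Dₙ`). -/
theorem stmt0 (n : ℕ) (hn : 5 ≤ n) :
    Nat.card (Dn n) = 2 ^ (n - 1) * Nat.factorial n := by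
  rw [DnAux.Dn_eq_map hn, DnAux.GG_eq_HH hn]
  rw [← Nat.card_congr (Subgroup.equivMapOfInjective (DnAux.HH n) (DnAux.phi n)
    (Equiv.Perm.viaEmbeddingHom_injective (DnAux.emb n))).toEquiv]
  exact DnAux.card_HH hn
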